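/- Let C_1, ..., C_m be classes of subsets with VC(C_j) = V_j and set V = Σ_j V_j. Then the class of pairwise intersections ⊓_{j=1}^m C_j = { ∩_j C_j : C_j ∈ C_j } has VC dimension at most c_1 · V · log(c_2 m), where c_1 = e/((e-1) log 2) and c_2 is a universal constant. -/

import Mathlib

/-- A class `C` of subsets of `X` shatters a finite set `S` if every subset of `S`
can be picked out as `c ∩ S` for some `c ∈ C`. -/
def Shatters {X : Type*} (C : Set (Set X)) (S : Finset X) : Prop :=
  ∀ T ⊆ S, ∃ c ∈ C, ∀ x ∈ S, x ∈ c ↔ x ∈ T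

/-- The VC dimension (in `ℕ∞`) of a class of subsets. -/
noncomputable def vcDimE {X : Type*} (C : Set (Set X)) : ℕ∞ :=
  sSup {n : ℕ∞ | ∃ S : Finset X, (S.card : ℕ∞) = n ∧ Shatters C S}

section SauerAux
open Finset

/-- Sauer–Shelah counting: a family of subsets of `S` all of whose shattered sets
have card ≤ d has at most `∑_{k≤d} C(|S|,k)` members. -/
lemma sauer_count {X : Type} [DecidableEq X] (𝒜 : Finset (Finset X)) (S : Finset X) (d : ℕ)
    (hsub : ∀ t ∈ 𝒜, t ⊆ S) (hvc : ∀ t, 𝒜.Shatters t → t.card ≤ d) :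
    𝒜.card ≤ ∑ k ∈ range (d + 1), S.card.choose k := by
  calc 𝒜.card ≤ 𝒜.shatterer.card := Finset.card_le_card_shatterer 𝒜
  _ ≤ ((range (d+1)).biUnion (fun k => S.powersetCard k)).card := by
      apply Finset.card_le_card
      intro t ht
      rw [Finset.mem_shatterer] at ht
      obtain ⟨u, hu, htu⟩ := ht.exists_superset
      have htS : t ⊆ S := htu.trans (hsub u hu)
      refine Finset.mem_biUnion.mpr ⟨t.card, ?_, ?_⟩
      · exact Finset.mem_range.mpr (Nat.lt_succ_of_le (hvc t ht))
      · exact Finset.mem_powersetCard.mpr ⟨htS, rfl⟩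
  _ ≤ ∑ k ∈ range (d+1), (S.powersetCard k).card := Finset.card_biUnion_le
  _ = ∑ k ∈ range (d+1), S.card.choose k := by
      simp [Finset.card_powersetCard]

/-- `∑_{k≤d} C(n,k) ≤ (e(n+d)/d)^d` for `d ≥ 1`. -/
lemma phi_bound (n d : ℕ) (hd : 1 ≤ d) :
    (∑ k ∈ range (d + 1), (n.choose k : ℝ)) ≤ (Real.exp 1 * (n + d) / d) ^ d := by
  have hdpos : (0:ℝ) < d := by exact_mod_cast hd
  have hndpos : (0:ℝ) < (n:ℝ) + d := by positivity
  set r : ℝ := d / ((n:ℝ) + d) with hr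
  have hrpos : 0 < r := by positivity
  have hrle : r ≤ 1 := by
    rw [hr, div_le_one hndpos]; linarith [Nat.cast_nonneg (α := ℝ) n]
  have key : (∑ k ∈ range (d + 1), (n.choose k : ℝ)) * r ^ d
      ≤ ∑ k ∈ range (d + 1), (n.choose k : ℝ) * r ^ k := by
    rw [Finset.sum_mul]
    apply Finset.sum_le_sum
    intro k hk
    have hk' : k ≤ d := Nat.lt_succ_iff.mp (Finset.mem_range.mp hk)
    have : r ^ d ≤ r ^ k := pow_le_pow_of_le_one hrpos.le hrle hk'
    have hc : (0:ℝ) ≤ (n.choose k : ℝ) := by positivity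
    nlinarith
  have key2 : ∑ k ∈ range (d + 1), (n.choose k : ℝ) * r ^ k
      ≤ ∑ k ∈ range (n + d + 1), (n.choose k : ℝ) * r ^ k := by
    apply Finset.sum_le_sum_of_subset_of_nonneg
    · exact Finset.range_subset_range.mpr (by omega)
    · intro k _ _; positivity
  have key3 : ∑ k ∈ range (n + d + 1), (n.choose k : ℝ) * r ^ k
      = ∑ k ∈ range (n + 1), (n.choose k : ℝ) * r ^ k := by
    symm
    apply Finset.sum_subset (Finset.range_subset_range.mpr (by omega))
    intro k _ hk
    have : n < k := by
      simp only [Finset.mem_range] at hk; omega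
    simp [Nat.choose_eq_zero_of_lt this]
  have key4 : ∑ k ∈ range (n + 1), (n.choose k : ℝ) * r ^ k = (1 + r) ^ n := by
    rw [add_comm (1:ℝ) r, add_pow]
    apply Finset.sum_congr rfl
    intro k _
    ring
  have key5 : (1 + r) ^ n ≤ Real.exp d := by
    have h1 : (1 + r) ^ n ≤ Real.exp r ^ n := by
      apply pow_le_pow_left₀ (by positivity)
      linarith [Real.add_one_le_exp r]
    have h2 : Real.exp r ^ n = Real.exp (n * r) := by
      rw [← Real.exp_nat_mul]
    have h3 : (n:ℝ) * r ≤ d := by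
      rw [hr, mul_div_assoc', div_le_iff₀ hndpos]
      nlinarith [Nat.cast_nonneg (α := ℝ) n]
    calc (1+r)^n ≤ Real.exp r ^ n := h1
      _ = Real.exp (n * r) := h2
      _ ≤ Real.exp d := Real.exp_le_exp.mpr h3
  have hrd : (0:ℝ) < r ^ d := by positivity
  have main : (∑ k ∈ range (d + 1), (n.choose k : ℝ)) * r ^ d ≤ Real.exp d := by
    calc _ ≤ _ := key
      _ ≤ _ := key2
      _ = _ := key3
      _ = _ := key4
      _ ≤ _ := key5
  have goal_eq : (Real.exp 1 * ((n:ℝ) + d) / d) ^ d = Real.exp d / r ^ d := by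
    rw [hr, div_pow, div_pow, mul_pow, Real.exp_one_pow]
    rw [div_div_eq_mul_div]
  rw [goal_eq, le_div_iff₀ hrd]
  exact main

/-- Log form: `log (∑_{k≤d} C(n,k)) ≤ d log B + (n+d)/B` for `B ≥ 1`. -/
lemma log_phi_bound (n d : ℕ) (B : ℝ) (hB : 1 ≤ B) :
    Real.log (∑ k ∈ range (d + 1), (n.choose k : ℝ)) ≤ d * Real.log B + ((n:ℝ) + d) / B := by
  have hBpos : (0:ℝ) < B := lt_of_lt_of_le one_pos hB
  rcases Nat.eq_zero_or_pos d with hd | hd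
  · subst hd
    simp only [zero_add, Finset.range_one, Finset.sum_singleton, Nat.choose_zero_right,
      Nat.cast_one, Real.log_one, Nat.cast_zero]
    have h1 : (0:ℝ) ≤ Real.log B := Real.log_nonneg hB
    have h2 : (0:ℝ) ≤ ((n:ℝ) + 0) / B := by positivity
    linarith
  · have hdpos : (0:ℝ) < d := by exact_mod_cast hd
    have hΦ := phi_bound n d hd
    have hSone : (1:ℝ) ≤ ∑ k ∈ range (d + 1), (n.choose k : ℝ) := by
      have h0 : (0:ℕ) ∈ range (d + 1) := Finset.mem_range.mpr (Nat.succ_pos d)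
      have := Finset.single_le_sum (f := fun k => ((n.choose k : ℕ) : ℝ))
        (fun k _ => by positivity) h0
      simpa using this
    have hx : (0:ℝ) < Real.exp 1 * ((n:ℝ) + d) / d := by positivity
    have hlog1 : Real.log (∑ k ∈ range (d + 1), (n.choose k : ℝ))
        ≤ Real.log ((Real.exp 1 * ((n:ℝ) + d) / d) ^ d) :=
      Real.log_le_log (by linarith) hΦ
    rw [Real.log_pow] at hlog1
    have hpos2 : (0:ℝ) < ((n:ℝ) + d) / (d * B) := by positivity
    have h1 : Real.log (((n:ℝ) + d) / (d * B)) ≤ ((n:ℝ) + d) / (d * B) - 1 :=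
      Real.log_le_sub_one_of_pos hpos2
    have hxeq : Real.exp 1 * ((n:ℝ) + d) / d = Real.exp 1 * (((n:ℝ) + d) / (d * B)) * B := by
      field_simp
    have h2 : Real.log (Real.exp 1 * ((n:ℝ) + d) / d) ≤ ((n:ℝ) + d) / (d * B) + Real.log B := by
      rw [hxeq, Real.log_mul (by positivity) (ne_of_gt hBpos),
        Real.log_mul (Real.exp_ne_zero 1) (ne_of_gt hpos2), Real.log_exp]
      linarith
    have h3 : (d:ℝ) * Real.log (Real.exp 1 * ((n:ℝ) + d) / d)
        ≤ (d:ℝ) * (((n:ℝ) + d) / (d * B) + Real.log B) :=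
      mul_le_mul_of_nonneg_left h2 (le_of_lt hdpos)
    have h4 : (d:ℝ) * (((n:ℝ) + d) / (d * B) + Real.log B)
        = (d:ℝ) * Real.log B + ((n:ℝ) + d) / B := by
      field_simp
      ring
    linarith

end SauerAux

/-- If `VC(C_j) = V_j` and `V = Σ_j V_j`, then the intersection class
`{ ∩_j c_j : c_j ∈ C_j }` has VC dimension at most `c₁ V log(c₂ m)`, where
`c₁ = e / ((e-1) log 2)` and `c₂` is a universal constant. -/
theorem stmt6 :
    ∃ c₂ : ℝ, 0 < c₂ ∧
      ∀ (X : Type) (m : ℕ), 0 < m →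
        ∀ (C : Fin m → Set (Set X)) (V : Fin m → ℕ),
          (∀ j, vcDimE (C j) = (V j : ℕ∞)) →
          ∀ S : Finset X,
            Shatters
              {s : Set X | ∃ c : Fin m → Set X, (∀ j, c j ∈ C j) ∧ s = ⋂ j, c j} S →
            (S.card : ℝ) ≤
              (Real.exp 1 / ((Real.exp 1 - 1) * Real.log 2)) * (∑ j, (V j : ℝ)) *
                Real.log (c₂ * m) := by
  classical
  have hlog2 : (0:ℝ) < Real.log 2 := Real.log_pos one_lt_two
  have hlog2' : Real.log 2 < 1 := by
    have := Real.log_two_lt_d9; linarith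
  have hexp1 : (2:ℝ) < Real.exp 1 := by
    have := Real.exp_one_gt_d9; linarith
  refine ⟨Real.exp 1 / Real.log 2 * Real.exp (Real.log 2 / Real.exp 1), ?_, ?_⟩
  · positivity
  intro X m hm C V hV S hS
  set n := S.card with hn
  -- trace families
  set F : Fin m → Finset (Finset X) :=
    fun j => S.powerset.filter (fun t => ∃ c ∈ C j, S.filter (fun x => x ∈ c) = t) with hF
  -- choice of witnesses
  have hch : ∀ T : Finset X, T ⊆ S →
      ∃ c : Fin m → Set X, (∀ j, c j ∈ C j) ∧ ∀ x ∈ S, (x ∈ ⋂ j, c j) ↔ x ∈ T := by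
    intro T hT
    obtain ⟨s, hsmem, hs⟩ := hS T hT
    obtain ⟨c, hc, rfl⟩ := hsmem
    exact ⟨c, hc, hs⟩
  choose! g hg1 hg2 using hch
  -- step 1 : 2^n ≤ ∏ |F j|
  have step1 : 2 ^ n ≤ ∏ j, (F j).card := by
    rw [← Finset.card_powerset, ← Fintype.card_piFinset]
    apply Finset.card_le_card_of_injOn (fun T j => S.filter (fun x => x ∈ g T j))
    · intro T hT
      rw [Finset.mem_coe, Fintype.mem_piFinset]
      intro j
      exact Finset.mem_filter.mpr ⟨Finset.mem_powerset.mpr (Finset.filter_subset _ _),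
        ⟨g T j, hg1 T (Finset.mem_powerset.mp hT) j, rfl⟩⟩
    · intro T₁ h₁ T₂ h₂ heq
      have hs₁ : T₁ ⊆ S := Finset.mem_powerset.mp (Finset.mem_coe.mp h₁)
      have hs₂ : T₂ ⊆ S := Finset.mem_powerset.mp (Finset.mem_coe.mp h₂)
      have heq' : ∀ j, S.filter (fun y => y ∈ g T₁ j) = S.filter (fun y => y ∈ g T₂ j) :=
        fun j => congrFun heq j
      ext x
      by_cases hx : x ∈ S
      · rw [← hg2 T₁ hs₁ x hx, ← hg2 T₂ hs₂ x hx]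
        simp only [Set.mem_iInter]
        constructor <;> intro h j
        · have hmem : x ∈ S.filter (fun y => y ∈ g T₁ j) :=
            Finset.mem_filter.mpr ⟨hx, h j⟩
          rw [heq' j] at hmem
          exact (Finset.mem_filter.mp hmem).2
        · have hmem : x ∈ S.filter (fun y => y ∈ g T₂ j) :=
            Finset.mem_filter.mpr ⟨hx, h j⟩
          rw [← heq' j] at hmem
          exact (Finset.mem_filter.mp hmem).2
      · exact ⟨fun h => absurd (hs₁ h) hx, fun h => absurd (hs₂ h) hx⟩
  -- step 2 : Sauer for each trace family
  have step2 : ∀ j, (F j).card ≤ ∑ k ∈ Finset.range (V j + 1), n.choose k := by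
    intro j
    apply sauer_count (F j) S (V j)
    · intro t ht
      exact Finset.mem_powerset.mp (Finset.mem_filter.mp ht).1
    · intro t ht
      have htS : t ⊆ S := by
        obtain ⟨u, hu, htu⟩ := ht.exists_superset
        exact htu.trans (Finset.mem_powerset.mp (Finset.mem_filter.mp hu).1)
      have hsh : Shatters (C j) t := by
        intro U hU
        obtain ⟨u, hu, huU⟩ := ht hU
        obtain ⟨-, c, hc, hcu⟩ := Finset.mem_filter.mp hu
        refine ⟨c, hc, fun x hxt => ?_⟩
        constructor
        · intro hxc
          rw [← huU]
          exact Finset.mem_inter.mpr ⟨hxt, by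
            rw [← hcu]; exact Finset.mem_filter.mpr ⟨htS hxt, hxc⟩⟩
        · intro hxU
          have hxu : x ∈ u := (Finset.mem_inter.mp (huU ▸ hxU)).2
          rw [← hcu] at hxu
          exact (Finset.mem_filter.mp hxu).2
      have hle : (t.card : ℕ∞) ≤ vcDimE (C j) :=
        le_sSup ⟨t, rfl, hsh⟩
      rw [hV j] at hle
      exact_mod_cast hle
  -- step 3 : real analysis
  set E := Real.exp 1 with hE
  set L := Real.log 2 with hL
  set b : ℝ := E / L with hb
  set B : ℝ := b * m with hBdef
  have hEpos : (0:ℝ) < E := Real.exp_pos 1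
  have hmR : (1:ℝ) ≤ (m:ℝ) := by exact_mod_cast hm
  have hmne : (m:ℝ) ≠ 0 := by positivity
  have hbpos : (0:ℝ) < b := by positivity
  have hb1 : (1:ℝ) ≤ b := by rw [hb, le_div_iff₀ hlog2]; linarith
  have hB1 : (1:ℝ) ≤ B := le_trans hb1 (le_mul_of_one_le_right hbpos.le hmR)
  have hBpos : (0:ℝ) < B := lt_of_lt_of_le one_pos hB1
  have hFpos : ∀ j, 0 < (F j).card := by
    intro j
    rcases Nat.eq_zero_or_pos (F j).card with h | h
    · exfalso
      have hz : ∏ j, (F j).card = 0 := Finset.prod_eq_zero (Finset.mem_univ j) h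
      have h2 := step1
      rw [hz] at h2
      have := Nat.one_le_two_pow (n := n)
      omega
    · exact h
  have hlogsum : (n:ℝ) * L ≤ (∑ j, (V j : ℝ)) * Real.log B
      + ((n:ℝ) * m + ∑ j, (V j : ℝ)) / B := by
    have h1 : ((2:ℝ)) ^ n ≤ ∏ j, ((F j).card : ℝ) := by exact_mod_cast step1
    have h2 : Real.log ((2:ℝ) ^ n) ≤ Real.log (∏ j, ((F j).card : ℝ)) :=
      Real.log_le_log (by positivity) h1
    rw [Real.log_pow, Real.log_prod (fun j _ => by
      have := hFpos j
      exact Nat.cast_ne_zero.mpr this.ne')] at h2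
    have h3 : ∀ j : Fin m, Real.log ((F j).card : ℝ)
        ≤ (V j : ℝ) * Real.log B + ((n:ℝ) + V j) / B := by
      intro j
      have hc : ((F j).card : ℝ) ≤ ∑ k ∈ Finset.range (V j + 1), (n.choose k : ℝ) := by
        exact_mod_cast step2 j
      have hlb := log_phi_bound n (V j) B hB1
      have hlog := Real.log_le_log (by exact_mod_cast hFpos j) hc
      linarith
    have h4 : ∑ j, Real.log ((F j).card : ℝ)
        ≤ ∑ j : Fin m, ((V j : ℝ) * Real.log B + ((n:ℝ) + V j) / B) :=
      Finset.sum_le_sum (fun j _ => h3 j)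
    have h5 : ∑ j : Fin m, ((V j : ℝ) * Real.log B + ((n:ℝ) + V j) / B)
        = (∑ j, (V j:ℝ)) * Real.log B + ((n:ℝ) * m + ∑ j, (V j:ℝ)) / B := by
      rw [Finset.sum_add_distrib, ← Finset.sum_mul, ← Finset.sum_div,
        Finset.sum_add_distrib, Finset.sum_const, Finset.card_univ, Fintype.card_fin,
        nsmul_eq_mul]
      ring_nf
    rw [h5] at h4
    calc (n:ℝ) * L = n * Real.log 2 := by rw [hL]
      _ ≤ ∑ j, Real.log ((F j).card : ℝ) := h2
      _ ≤ _ := h4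
  set Vr := ∑ j, (V j : ℝ) with hVr
  have hVr0 : (0:ℝ) ≤ Vr := Finset.sum_nonneg (fun j _ => by positivity)
  clear_value n E L b B Vr
  have hLne : L ≠ 0 := ne_of_gt hlog2
  have hEne : E ≠ 0 := ne_of_gt hEpos
  have hdiv1 : ((n:ℝ) * m) / B = (n:ℝ) * (L / E) := by
    rw [hBdef, hb]; field_simp
  have hdiv2 : Vr / B ≤ Vr * (L / E) := by
    have hble : b ≤ B := by rw [hBdef]; exact le_mul_of_one_le_right hbpos.le hmR
    have h1 : Vr / B ≤ Vr / b := by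
      rw [div_eq_mul_one_div Vr B, div_eq_mul_one_div Vr b]
      exact mul_le_mul_of_nonneg_left (one_div_le_one_div_of_le hbpos hble) hVr0
    have h2 : Vr / b = Vr * (L / E) := by rw [hb]; field_simp
    linarith
  have hlogB : Real.log B = Real.log b + Real.log m := by
    rw [hBdef, Real.log_mul (ne_of_gt hbpos) hmne]
  have hM : Real.log (b * Real.exp (L / E) * m) = Real.log b + L / E + Real.log m := by
    rw [Real.log_mul (by positivity) hmne,
      Real.log_mul (ne_of_gt hbpos) (Real.exp_ne_zero _), Real.log_exp]
  have hE1 : (1:ℝ) < E := by linarith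
  have hK : (0:ℝ) < (E - 1) * L / E := div_pos (mul_pos (by linarith) hlog2) hEpos
  have hkey : (n:ℝ) * ((E - 1) * L / E) ≤ Vr * (Real.log b + L / E + Real.log m) := by
    have expand : (n:ℝ) * ((E - 1) * L / E) = (n:ℝ) * L - (n:ℝ) * (L / E) := by
      field_simp
    have hgoal : (n:ℝ) * L ≤ Vr * (Real.log b + Real.log m) + (n:ℝ) * (L / E) + Vr * (L / E) := by
      have := hlogsum
      rw [hlogB] at this
      have hsplit : ((n:ℝ) * m + Vr) / B = ((n:ℝ) * m) / B + Vr / B := add_div _ _ _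
      rw [hsplit, hdiv1] at this
      nlinarith [hdiv2]
    nlinarith [hVr0, Real.log_nonneg hb1, Real.log_nonneg hmR]
  rw [hM]
  have hfinal : E / ((E - 1) * L) * Vr * (Real.log b + L / E + Real.log m)
      = Vr * (Real.log b + L / E + Real.log m) / ((E - 1) * L / E) := by
    rw [div_div_eq_mul_div]
    ring
  rw [hfinal, le_div_iff₀ hK]
  linarith
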